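/- Let n, p, q be positive natural numbers, let M be an n×n real symmetric matrix, C a q×n real matrix, D a q×p real matrix, and let λ, μ be real numbers and α > 0. If the symmetric block matrix [[λM, 0, Cᵀ], [0, (α−μ)·I_p, Dᵀ], [C, D, α·I_q]] (of size (n+p+q)×(n+p+q)) is positive semidefinite, then for all vectors x ∈ ℝⁿ and w ∈ ℝᵖ one has ‖C x + D w‖² ≤ α·(λ·xᵀ M x + (α−μ)·‖w‖²). -/

import Mathlib

open Matrix

/-- The 3×3 block matrix on the index type `Fin n ⊕ (Fin p ⊕ Fin q)`. -/
def blk3 {n p q : ℕ}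
    (A11 : Matrix (Fin n) (Fin n) ℝ) (A12 : Matrix (Fin n) (Fin p) ℝ)
    (A13 : Matrix (Fin n) (Fin q) ℝ)
    (A21 : Matrix (Fin p) (Fin n) ℝ) (A22 : Matrix (Fin p) (Fin p) ℝ)
    (A23 : Matrix (Fin p) (Fin q) ℝ)
    (A31 : Matrix (Fin q) (Fin n) ℝ) (A32 : Matrix (Fin q) (Fin p) ℝ)
    (A33 : Matrix (Fin q) (Fin q) ℝ) :
    Matrix (Fin n ⊕ (Fin p ⊕ Fin q)) (Fin n ⊕ (Fin p ⊕ Fin q)) ℝ :=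
  Matrix.fromBlocks A11 (Matrix.of fun i j => Sum.elim (A12 i) (A13 i) j)
    (Matrix.of fun i j => Sum.elim (fun ip => A21 ip j) (fun iq => A31 iq j) i)
    (Matrix.fromBlocks A22 A23 A32 A33)

lemma mulVec_elim_cols {m n p : ℕ} (A : Matrix (Fin m) (Fin n) ℝ)
    (B : Matrix (Fin m) (Fin p) ℝ) (u : Fin n → ℝ) (v : Fin p → ℝ) :
    (Matrix.of fun i j => Sum.elim (A i) (B i) j) *ᵥ Sum.elim u v = A *ᵥ u + B *ᵥ v := by
  funext i
  simp [Matrix.mulVec, sumElim_dotProduct_sumElim]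

lemma mulVec_elim_rows {m n p : ℕ} (A : Matrix (Fin m) (Fin n) ℝ)
    (B : Matrix (Fin p) (Fin n) ℝ) (u : Fin n → ℝ) :
    (Matrix.of fun i j => Sum.elim (fun i' => A i' j) (fun i' => B i' j) i) *ᵥ u
      = Sum.elim (A *ᵥ u) (B *ᵥ u) := by
  funext i
  cases i <;> rfl

/-- If the block matrix [[λM, 0, Cᵀ], [0, (α−μ)I_p, Dᵀ], [C, D, αI_q]] is positive
semidefinite, then for all x, w one has ‖Cx + Dw‖² ≤ α(λ·xᵀMx + (α−μ)‖w‖²). -/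
theorem stmt0 (n p q : ℕ) (hn : 0 < n) (hp : 0 < p) (hq : 0 < q)
    (M : Matrix (Fin n) (Fin n) ℝ) (hM : M.IsSymm)
    (C : Matrix (Fin q) (Fin n) ℝ) (D : Matrix (Fin q) (Fin p) ℝ)
    (lam mu alp : ℝ) (halp : 0 < alp)
    (h : (blk3 (lam • M) 0 Cᵀ
               0 ((alp - mu) • (1 : Matrix (Fin p) (Fin p) ℝ)) Dᵀ
               C D (alp • (1 : Matrix (Fin q) (Fin q) ℝ))).PosSemidef) :
    ∀ (x : Fin n → ℝ) (w : Fin p → ℝ),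
      (C *ᵥ x + D *ᵥ w) ⬝ᵥ (C *ᵥ x + D *ᵥ w) ≤
        alp * (lam * (x ⬝ᵥ (M *ᵥ x)) + (alp - mu) * (w ⬝ᵥ w)) := by
  intro x w
  set s : Fin q → ℝ := C *ᵥ x + D *ᵥ w with hs
  set y : Fin q → ℝ := (-(1/alp)) • s with hy
  have h2 := h.dotProduct_mulVec_nonneg (Sum.elim x (Sum.elim w y))
  rw [blk3, Matrix.fromBlocks_mulVec, Matrix.fromBlocks_mulVec] at h2
  simp only [Sum.elim_comp_inl, Sum.elim_comp_inr] at h2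
  rw [mulVec_elim_cols, mulVec_elim_rows] at h2
  simp only [star_trivial, sumElim_dotProduct_sumElim, dotProduct_add,
    Matrix.add_mulVec, Sum.elim_add_add, Matrix.zero_mulVec, Matrix.mulVec_zero,
    Matrix.smul_mulVec, Matrix.one_mulVec, dotProduct_smul, smul_eq_mul,
    dotProduct_zero, zero_dotProduct, add_zero, zero_add] at h2
  have hxy : x ⬝ᵥ (Cᵀ *ᵥ y) = y ⬝ᵥ (C *ᵥ x) := by
    rw [Matrix.mulVec_transpose, dotProduct_comm, ← Matrix.dotProduct_mulVec]
  have hwy : w ⬝ᵥ (Dᵀ *ᵥ y) = y ⬝ᵥ (D *ᵥ w) := by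
    rw [Matrix.mulVec_transpose, dotProduct_comm, ← Matrix.dotProduct_mulVec]
  rw [hxy, hwy] at h2
  have halp' : alp ≠ 0 := ne_of_gt halp
  have hycx : alp * (y ⬝ᵥ (C *ᵥ x) + y ⬝ᵥ (D *ᵥ w)) = -(s ⬝ᵥ s) := by
    rw [hy]
    simp only [smul_dotProduct, smul_eq_mul, ← mul_add, ← dotProduct_add, ← hs]
    field_simp
  have hyy : alp * (alp * (y ⬝ᵥ y)) = s ⬝ᵥ s := by
    rw [hy]
    simp only [smul_dotProduct, dotProduct_smul, smul_eq_mul]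
    field_simp
  have h3 := mul_nonneg halp.le h2
  linarith [h3, hycx, hyy]
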